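/- Let N₁, N₂ ≤ Perm(X) be regular subgroups, and suppose the actions of the group algebras E[N₁] and E[N₂] on Map(X,E) commute: z₁ • (z₂ • f) = z₂ • (z₁ • f) for all z₁ ∈ E[N₁], z₂ ∈ E[N₂], and f : X → E. Then N₂ = Cent_{Perm(X)}(N₁), the centralizer of N₁ in Perm(X). (Proposition 2.5: if two Hopf–Galois structures have commuting actions, then N₂ = N₁'.) -/

import Mathlib

/-- The action of the group algebra `E[N]` of a subgroup `N ≤ Perm X` on `Map(X, E)`:
`(η • f)(y) = f(η⁻¹ y)`, extended `E`-linearly. -/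
noncomputable def permAct {X E : Type*} [Field E] (N : Subgroup (Equiv.Perm X))
    (z : MonoidAlgebra E ↥N) (f : X → E) : X → E :=
  fun y => Finsupp.sum z.coeff fun η c => c * f ((η : Equiv.Perm X)⁻¹ y)

lemma permAct_single {X E : Type*} [Field E] (N : Subgroup (Equiv.Perm X))
    (η : ↥N) (f : X → E) :
    permAct N (MonoidAlgebra.single η (1 : E)) f = fun y => f ((η : Equiv.Perm X)⁻¹ y) := by
  funext y
  simp [permAct, MonoidAlgebra.coeff_single, Finsupp.sum_single_index]

/-- Proposition 2.5: if `N₁`, `N₂` are regular subgroups of `Perm X` (`X` finite nonempty) and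
the actions of the group algebras `E[N₁]`, `E[N₂]` on `Map(X, E)` commute, then
`N₂ = Cent_{Perm X}(N₁)`. -/
theorem commuting_algebra_actions_centralizer
    {X E : Type*} [Fintype X] [Nonempty X] [Field E]
    (N₁ N₂ : Subgroup (Equiv.Perm X))
    (htrans₁ : ∀ y z : X, ∃ η ∈ N₁, η y = z)
    (hcard₁ : Nat.card N₁ = Nat.card X)
    (htrans₂ : ∀ y z : X, ∃ η ∈ N₂, η y = z)
    (hcard₂ : Nat.card N₂ = Nat.card X)
    (hcomm : ∀ (z₁ : MonoidAlgebra E ↥N₁) (z₂ : MonoidAlgebra E ↥N₂) (f : X → E),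
      permAct N₁ z₁ (permAct N₂ z₂ f) = permAct N₂ z₂ (permAct N₁ z₁ f)) :
    N₂ = Subgroup.centralizer (N₁ : Set (Equiv.Perm X)) := by
  classical
  -- Step 1: N₂ ≤ centralizer N₁
  have hle : N₂ ≤ Subgroup.centralizer (N₁ : Set (Equiv.Perm X)) := by
    intro σ hσ
    rw [Subgroup.mem_centralizer_iff]
    intro g hg
    have key : ∀ y : X, σ⁻¹ (g⁻¹ y) = g⁻¹ (σ⁻¹ y) := by
      intro y
      have h := congrFun (hcomm (MonoidAlgebra.single (⟨g, hg⟩ : ↥N₁) (1 : E))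
        (MonoidAlgebra.single (⟨σ, hσ⟩ : ↥N₂) (1 : E))
        (fun x => if x = g⁻¹ (σ⁻¹ y) then (1 : E) else 0)) y
      simp only [permAct_single, if_true, eq_self_iff_true] at h
      by_contra hne
      rw [if_neg hne] at h
      exact one_ne_zero h.symm
    have hinv : (g * σ)⁻¹ = (σ * g)⁻¹ := by
      ext y
      simpa using key y
    exact inv_injective hinv
  -- Step 2: the centralizer acts freely, so its cardinality is at most |X|
  obtain ⟨x₀⟩ := (inferInstance : Nonempty X)
  have hinj : Function.Injective
      (fun σ : ↥(Subgroup.centralizer (N₁ : Set (Equiv.Perm X))) => (σ : Equiv.Perm X) x₀) := by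
    intro σ τ h
    ext y
    obtain ⟨η, hη, hηx⟩ := htrans₁ x₀ y
    have hσ := σ.2
    have hτ := τ.2
    rw [Subgroup.mem_centralizer_iff] at hσ hτ
    have hσc := hσ η hη
    have hτc := hτ η hη
    calc (σ : Equiv.Perm X) y = (σ : Equiv.Perm X) (η x₀) := by rw [hηx]
      _ = ((σ : Equiv.Perm X) * η) x₀ := rfl
      _ = (η * (σ : Equiv.Perm X)) x₀ := by rw [hσc]
      _ = η ((σ : Equiv.Perm X) x₀) := rfl
      _ = η ((τ : Equiv.Perm X) x₀) := by rw [show (σ : Equiv.Perm X) x₀ = (τ : Equiv.Perm X) x₀ from h]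
      _ = ((τ : Equiv.Perm X) * η) x₀ := by rw [← hτc]; rfl
      _ = (τ : Equiv.Perm X) y := by rw [Equiv.Perm.mul_apply, hηx]
  have hcardC : Nat.card ↥(Subgroup.centralizer (N₁ : Set (Equiv.Perm X))) ≤ Nat.card X :=
    Nat.card_le_card_of_injective _ hinj
  exact Subgroup.eq_of_le_of_card_ge hle (hcardC.trans hcard₂.ge)
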